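/- Let p, v be real numbers with p > 1 and v > 1, set τ = v^(1/(1−p)) · (1 − v^(p/(1−p)))^(−1/p) (real powers), and let q1 = (x1,y1), q2 = (x2,y2) with y1 ≥ 0, y2 ≥ 0 and x1 + y1·τ ≤ x2 − y2·τ. Then the value (y1 + y2)·(1 + τ^p)^(1/p) + ((x2 − y2·τ) − (x1 + y1·τ))/v is the least element of the set { c : ℝ | ∃ a b : ℝ, a ≤ b ∧ c = (|x1 − a|^p + y1^p)^(1/p) + (b − a)/v + (|x2 − b|^p + y2^p)^(1/p) }. -/

import Mathlib

open Real

/-- The optimal cost of a time-path from `q1 = (x1,y1)` to `q2 = (x2,y2)` using the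
highway, entering at `(a,0)` and exiting at `(b,0)` with `a ≤ b`, is attained at the
entry point `(x1 + y1·τ, 0)` and exit point `(x2 - y2·τ, 0)`, where
`τ = v^(1/(1-p)) · (1 - v^(p/(1-p)))^(-1/p)` is the tangent of the incidence angle. -/
theorem stmt_5 (p v x1 y1 x2 y2 : ℝ) (hp : 1 < p) (hv : 1 < v)
    (hy1 : 0 ≤ y1) (hy2 : 0 ≤ y2) :
    let τ : ℝ := v ^ (1 / (1 - p)) * (1 - v ^ (p / (1 - p))) ^ (-1 / p)
    x1 + y1 * τ ≤ x2 - y2 * τ →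
    IsLeast
      {c : ℝ | ∃ a b : ℝ, a ≤ b ∧
        c = (|x1 - a| ^ p + y1 ^ p) ^ (1 / p) + (b - a) / v
            + (|x2 - b| ^ p + y2 ^ p) ^ (1 / p)}
      ((y1 + y2) * (1 + τ ^ p) ^ (1 / p) + ((x2 - y2 * τ) - (x1 + y1 * τ)) / v) := by
  intro τ hle
  have hv0 : (0:ℝ) < v := lt_trans one_pos hv
  have hp0 : (0:ℝ) < p := lt_trans one_pos hp
  have hpne : p ≠ 0 := hp0.ne'
  have hp1 : (0:ℝ) < p - 1 := sub_pos.2 hp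
  have h1p : (1:ℝ) - p ≠ 0 := by linarith
  set q : ℝ := p / (p - 1) with hq
  have hpq : p.HolderConjugate q := (Real.holderConjugate_iff_eq_conjExponent hp).2 hq
  set r : ℝ := v ^ (p / (1 - p)) with hrdef
  have hr0 : 0 < r := rpow_pos_of_pos hv0 _
  have hexp : p / (1 - p) < 0 := div_neg_of_pos_of_neg hp0 (by linarith)
  have hr1 : r < 1 := rpow_lt_one_of_one_lt_of_neg hv hexp
  have h1r : 0 < 1 - r := by linarith
  have hτdef : τ = v ^ (1 / (1 - p)) * (1 - r) ^ (-1 / p) := rfl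
  have hτ0 : 0 < τ := mul_pos (rpow_pos_of_pos hv0 _) (rpow_pos_of_pos h1r _)
  have hτp : τ ^ p = r / (1 - r) := by
    rw [hτdef, mul_rpow (rpow_nonneg hv0.le _) (rpow_nonneg h1r.le _),
      ← rpow_mul hv0.le, ← rpow_mul h1r.le,
      show 1 / (1 - p) * p = p / (1 - p) by ring,
      show -1 / p * p = -1 by field_simp, rpow_neg_one, ← hrdef, div_eq_mul_inv]
  have h1τ : (1:ℝ) + τ ^ p = (1 - r)⁻¹ := by
    rw [hτp]; field_simp; ring
  have hIa : ((1:ℝ) + τ ^ p) ^ (1 / p) = (1 - r) ^ (-(1 / p)) := by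
    rw [h1τ, ← rpow_neg_one, ← rpow_mul h1r.le, neg_one_mul]
  have hτv : τ / v = r * (1 - r) ^ (-(1 / p)) := by
    have hvp : r = v ^ (1 / (1 - p)) / v := by
      rw [hrdef, show p / (1 - p) = 1 / (1 - p) - 1 by field_simp; try ring,
        rpow_sub hv0, rpow_one]
    rw [hτdef, hvp, show (-1 : ℝ) / p = -(1 / p) by ring]
    ring
  set w : ℝ := (1 - r) ^ ((p - 1) / p) with hwdef
  have hw : ((1:ℝ) + τ ^ p) ^ (1 / p) - τ / v = w := by
    rw [hIa, hτv, hwdef,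
      show (p - 1) / p = 1 + -(1 / p) by field_simp; try ring,
      rpow_add h1r, rpow_one]
    ring
  have hwq : w ^ q = 1 - r := by
    rw [hwdef, ← rpow_mul h1r.le, show (p - 1) / p * q = 1 by rw [hq]; field_simp,
      rpow_one]
  have huq : (v⁻¹ : ℝ) ^ q = r := by
    rw [show (v⁻¹ : ℝ) = v ^ (-1 : ℝ) by rw [rpow_neg_one], ← rpow_mul hv0.le, hrdef]
    congr 1
    rw [hq]; field_simp; try ring
  have hw0 : 0 ≤ w := (rpow_pos_of_pos h1r _).le
  -- key pointwise inequality
  have key : ∀ y t : ℝ, 0 ≤ y → y * w ≤ (|t| ^ p + y ^ p) ^ (1 / p) + t / v := by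
    intro y t hy
    have holder := Real.inner_le_Lp_mul_Lq_of_nonneg (s := Finset.univ)
      (f := ![|t|, y]) (g := ![v⁻¹, w]) hpq
      (by intro i _; fin_cases i <;> simp [abs_nonneg, hy])
      (by intro i _; fin_cases i <;> simp [hw0, inv_nonneg.2 hv0.le])
    simp only [Fin.sum_univ_two, Matrix.cons_val_zero, Matrix.cons_val_one,
      Matrix.head_cons] at holder
    rw [huq, hwq, show r + (1 - r) = (1:ℝ) by ring, one_rpow, mul_one] at holder
    have h2 : -(t / v) ≤ |t| * v⁻¹ := by
      rw [div_eq_mul_inv, ← neg_mul]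
      exact mul_le_mul_of_nonneg_right (neg_le_abs t) (inv_nonneg.2 hv0.le)
    linarith
  -- equality at the optimal entry/exit points
  have hel : ∀ y : ℝ, 0 ≤ y → ((y * τ) ^ p + y ^ p) ^ (1 / p) = y * (1 + τ ^ p) ^ (1 / p) := by
    intro y hy
    rw [mul_rpow hy hτ0.le, show y ^ p * τ ^ p + y ^ p = y ^ p * (1 + τ ^ p) by ring,
      mul_rpow (rpow_nonneg hy _) (by positivity), ← rpow_mul hy,
      mul_one_div, div_self hpne, rpow_one]
  constructor
  · refine ⟨x1 + y1 * τ, x2 - y2 * τ, hle, ?_⟩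
    have e1 : |x1 - (x1 + y1 * τ)| = y1 * τ := by
      rw [show x1 - (x1 + y1 * τ) = -(y1 * τ) by ring, abs_neg,
        abs_of_nonneg (mul_nonneg hy1 hτ0.le)]
    have e2 : |x2 - (x2 - y2 * τ)| = y2 * τ := by
      rw [show x2 - (x2 - y2 * τ) = y2 * τ by ring,
        abs_of_nonneg (mul_nonneg hy2 hτ0.le)]
    rw [e1, e2, hel y1 hy1, hel y2 hy2]
    ring
  · rintro c ⟨a, b, hab, rfl⟩
    have k1 := key y1 (x1 - a) hy1
    have k2 := key y2 (b - x2) hy2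
    rw [abs_sub_comm x2 b]
    have hopt : (y1 + y2) * (1 + τ ^ p) ^ (1 / p) + ((x2 - y2 * τ) - (x1 + y1 * τ)) / v
        = y1 * w + y2 * w + (x2 - x1) / v := by
      rw [← hw]; field_simp; try ring
    have hsplit : (b - a) / v = (x1 - a) / v + (b - x2) / v + (x2 - x1) / v := by ring
    rw [hopt]
    linarith
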